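/- Let M = M(n) be Lehmer's n×n tridiagonal matrix with M_{i,i} = 1, M_{i,i+1} = s·r^(i-1), M_{i+1,i} = s·r^(i-1), and all other entries zero. Let L and U be the n×n matrices defined by L_{j,j} = 1, L_{j+1,j} = s·r^(j-1)·λ(j-1)/λ(j), all other entries of L zero, and U_{j,j} = λ(j)/λ(j-1), U_{j,j+1} = s·r^(j-1), all other entries of U zero. Then L·U = M; that is, L and U give the LU-decomposition of Lehmer's matrix, with L unit lower triangular (in fact unit lower bidiagonal) and U upper triangular (in fact upper bidiagonal). -/

import Mathlib

/-- The Gaussian `q`-binomial coefficient `[n choose k]_q`, defined via the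
Pascal-type recursion. It agrees with `(q;q)_n / ((q;q)_k (q;q)_{n-k})`. -/
def qbinom {R : Type*} [CommRing R] (q : R) : ℕ → ℕ → R
  | _, 0 => 1
  | 0, _ + 1 => 0
  | n + 1, k + 1 => qbinom q n (k + 1) + q ^ (n - k) * qbinom q n k

/-- `λ(j) = Σ_{0 ≤ k ≤ j/2} [j-k choose k]_q · (-1)^k · q^(k(k-1)) · z^k`. -/
def lam {R : Type*} [CommRing R] (q z : R) (j : ℕ) : R :=
  ∑ k ∈ Finset.range (j / 2 + 1),
    qbinom q (j - k) k * (-1 : R) ^ k * q ^ (k * (k - 1)) * z ^ k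

/-- The unit lower bidiagonal matrix `L` (1-based: `L_{j,j} = 1`,
`L_{j+1,j} = s·r^(j-1)·λ(j-1)/λ(j)`), written with 0-based `Fin n` indices. -/
def Lmat {F : Type*} [Field F] (r s : F) (n : ℕ) : Matrix (Fin n) (Fin n) F :=
  Matrix.of fun a b =>
    if (a : ℕ) = (b : ℕ) then 1
    else if (a : ℕ) = (b : ℕ) + 1 then
      s * r ^ (b : ℕ) * lam (r ^ 2) (s ^ 2) (b : ℕ) / lam (r ^ 2) (s ^ 2) ((b : ℕ) + 1)
    else 0

/-- The upper bidiagonal matrix `U` (1-based: `U_{j,j} = λ(j)/λ(j-1)`,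
`U_{j,j+1} = s·r^(j-1)`), written with 0-based `Fin n` indices. -/
def Umat {F : Type*} [Field F] (r s : F) (n : ℕ) : Matrix (Fin n) (Fin n) F :=
  Matrix.of fun a b =>
    if (a : ℕ) = (b : ℕ) then
      lam (r ^ 2) (s ^ 2) ((a : ℕ) + 1) / lam (r ^ 2) (s ^ 2) (a : ℕ)
    else if (b : ℕ) = (a : ℕ) + 1 then s * r ^ (a : ℕ)
    else 0


/-- Lehmer's tridiagonal matrix `M(n)` (1-based: `M_{i,i} = 1`,
`M_{i,i+1} = s·r^(i-1)`, `M_{i+1,i} = s·r^(i-1)`), with 0-based `Fin n` indices. -/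
def lehmerM {R : Type*} [CommRing R] (r s : R) (n : ℕ) : Matrix (Fin n) (Fin n) R :=
  Matrix.of fun a b =>
    if (a : ℕ) = (b : ℕ) then 1
    else if (a : ℕ) + 1 = (b : ℕ) then s * r ^ (a : ℕ)
    else if (b : ℕ) + 1 = (a : ℕ) then s * r ^ (b : ℕ)
    else 0

lemma qbinom_eq_zero {R : Type*} [CommRing R] (q : R) :
    ∀ n k : ℕ, n < k → qbinom q n k = 0 := by
  intro n
  induction n with
  | zero =>
    intro k hk
    cases k with
    | zero => omega
    | succ m => rfl
  | succ n ih =>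
    intro k hk
    cases k with
    | zero => omega
    | succ m =>
      show qbinom q n (m + 1) + q ^ (n - m) * qbinom q n m = 0
      rw [ih (m + 1) (by omega), ih m (by omega)]
      ring

lemma lam_eq_sum {R : Type*} [CommRing R] (q z : R) (m N : ℕ) (h : m / 2 + 1 ≤ N) :
    lam q z m = ∑ k ∈ Finset.range N,
      qbinom q (m - k) k * (-1 : R) ^ k * q ^ (k * (k - 1)) * z ^ k := by
  rw [lam]
  apply Finset.sum_subset (Finset.range_subset_range.2 h)
  intro x hx hnx
  simp only [Finset.mem_range] at hx hnx
  rw [qbinom_eq_zero q (m - x) x (by omega)]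
  ring

lemma lam_rec {R : Type*} [CommRing R] (q z : R) (j : ℕ) :
    lam q z (j + 2) = lam q z (j + 1) - z * q ^ j * lam q z j := by
  rw [lam_eq_sum q z (j + 2) (j / 2 + 2) (by omega),
      lam_eq_sum q z (j + 1) (j / 2 + 2) (by omega), lam]
  rw [Finset.sum_range_succ' _ (j / 2 + 1), Finset.sum_range_succ' _ (j / 2 + 1)]
  have h0 : ∀ m : ℕ, qbinom q (m - 0) 0 * (-1 : R) ^ 0 * q ^ (0 * (0 - 1)) * z ^ 0 = 1 := by
    intro m; simp [qbinom]
  rw [h0, h0, Finset.mul_sum]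
  have key : ∀ k ∈ Finset.range (j / 2 + 1),
      qbinom q (j + 2 - (k + 1)) (k + 1) * (-1 : R) ^ (k + 1) * q ^ ((k + 1) * (k + 1 - 1)) * z ^ (k + 1)
      = qbinom q (j + 1 - (k + 1)) (k + 1) * (-1 : R) ^ (k + 1) * q ^ ((k + 1) * (k + 1 - 1)) * z ^ (k + 1)
        - z * q ^ j * (qbinom q (j - k) k * (-1 : R) ^ k * q ^ (k * (k - 1)) * z ^ k) := by
    intro k hk
    simp only [Finset.mem_range] at hk
    have h2k : 2 * k ≤ j := by omega
    have e1 : j + 2 - (k + 1) = (j - k) + 1 := by omega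
    have e2 : j + 1 - (k + 1) = j - k := by omega
    simp only [Nat.add_sub_cancel]
    rw [e1, e2,
      show qbinom q (j - k + 1) (k + 1)
        = qbinom q (j - k) (k + 1) + q ^ (j - k - k) * qbinom q (j - k) k from rfl]
    have e3 : j - k - k + (k + 1) * k = j + k * (k - 1) := by
      rw [Nat.sub_sub]
      cases k with
      | zero => simp
      | succ m =>
        simp only [Nat.add_sub_cancel]
        zify [show m + 1 + (m + 1) ≤ j by omega]
        ring
    have e4 : q ^ (j - k - k) * q ^ ((k + 1) * k) = q ^ j * q ^ (k * (k - 1)) := by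
      rw [← pow_add, ← pow_add, e3]
    linear_combination ((-1 : R) ^ (k + 1) * z ^ (k + 1) * qbinom q (j - k) k) * e4
  rw [Finset.sum_congr rfl key, Finset.sum_sub_distrib]
  ring

lemma lam_zero {R : Type*} [CommRing R] (q z : R) : lam q z 0 = 1 := by
  simp [lam, qbinom]

lemma lam_one {R : Type*} [CommRing R] (q z : R) : lam q z 1 = 1 := by
  simp [lam, qbinom]

/-- With `q = r²`, `z = s²`, and `λ(j) ≠ 0` for `0 ≤ j ≤ n`, the matrices `L`
and `U` give the LU-decomposition of Lehmer's matrix: `L·U = M`, with `L` unit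
lower bidiagonal and `U` upper bidiagonal. -/
theorem LU_decomposition {F : Type*} [Field F] (r s : F) (n : ℕ)
    (hlam : ∀ j : ℕ, j ≤ n → lam (r ^ 2) (s ^ 2) j ≠ 0) :
    Lmat r s n * Umat r s n = lehmerM r s n := by
  ext a b
  rw [Matrix.mul_apply]
  by_cases h0 : (a : ℕ) = 0
  · rw [Finset.sum_eq_single_of_mem a (Finset.mem_univ a)]
    · simp only [Lmat, Umat, lehmerM, Matrix.of_apply, if_pos rfl, if_true, one_mul]
      by_cases hb : (a : ℕ) = (b : ℕ)
      · rw [if_pos hb, if_pos hb]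
        simp [h0, lam_zero, lam_one]
      · rw [if_neg hb, if_neg hb]
        by_cases hb2 : (b : ℕ) = (a : ℕ) + 1
        · rw [if_pos hb2, if_pos hb2.symm]
        · rw [if_neg hb2, if_neg (fun h => hb2 h.symm), if_neg (by omega)]
    · intro c _ hc
      have hvc : (a : ℕ) ≠ (c : ℕ) := fun h => hc (Fin.ext h.symm)
      simp only [Lmat, Matrix.of_apply, if_neg hvc, if_neg (by omega : ¬ (a : ℕ) = (c : ℕ) + 1)]
      exact zero_mul _
  · obtain ⟨i, hi⟩ := Nat.exists_eq_succ_of_ne_zero h0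
    have hlt := a.isLt
    have hin : i + 1 < n := by omega
    set a' : Fin n := ⟨i, by omega⟩ with ha'
    have hva' : (a' : ℕ) = i := rfl
    have hne : a ≠ a' := by
      intro hh
      have : (a : ℕ) = i := by rw [hh]
      omega
    have hL1 : lam (r ^ 2) (s ^ 2) (i + 1) ≠ 0 := hlam _ (by omega)
    have hL0 : lam (r ^ 2) (s ^ 2) i ≠ 0 := hlam _ (by omega)
    rw [← Finset.add_sum_erase _ _ (Finset.mem_univ a'),
        Finset.sum_eq_single_of_mem a (Finset.mem_erase.mpr ⟨hne, Finset.mem_univ a⟩)]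
    · simp only [Lmat, Umat, lehmerM, Matrix.of_apply, hva', hi, Nat.succ_eq_add_one,
        if_true, one_mul]
      rw [if_neg (show ¬ i + 1 = i by omega)]
      by_cases hb : (b : ℕ) = i + 1
      · rw [if_neg (by omega : ¬ i = (b : ℕ)), if_pos hb,
            if_pos hb.symm, if_pos hb.symm]
        field_simp
        linear_combination lam_rec (r ^ 2) (s ^ 2) i
      · by_cases hb0 : (b : ℕ) = i
        · rw [if_pos hb0.symm, if_neg (by omega : ¬ i + 1 = (b : ℕ)),
              if_neg (by omega : ¬ (b : ℕ) = i + 1 + 1),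
              if_neg (by omega : ¬ i + 1 = (b : ℕ)),
              if_neg (by omega : ¬ i + 1 + 1 = (b : ℕ)),
              if_pos (by omega : (b : ℕ) + 1 = i + 1), hb0]
          field_simp
          ring
        · by_cases hb2 : (b : ℕ) = i + 2
          · rw [if_neg (by omega : ¬ i = (b : ℕ)),
                if_neg (by omega : ¬ (b : ℕ) = i + 1),
                if_neg (by omega : ¬ i + 1 = (b : ℕ)),
                if_pos (by omega : (b : ℕ) = i + 1 + 1),
                if_neg (by omega : ¬ i + 1 = (b : ℕ)),
                if_pos (by omega : i + 1 + 1 = (b : ℕ))]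
            ring
          · rw [if_neg (by omega : ¬ i = (b : ℕ)),
                if_neg (by omega : ¬ (b : ℕ) = i + 1),
                if_neg (by omega : ¬ i + 1 = (b : ℕ)),
                if_neg (by omega : ¬ (b : ℕ) = i + 1 + 1),
                if_neg (by omega : ¬ i + 1 = (b : ℕ)),
                if_neg (by omega : ¬ i + 1 + 1 = (b : ℕ)),
                if_neg (by omega : ¬ (b : ℕ) + 1 = i + 1)]
            ring
    · intro c hc hca
      have hc' : c ≠ a' := (Finset.mem_erase.mp hc).1
      have h1 : ¬ (a : ℕ) = (c : ℕ) := fun h => hca (Fin.ext h.symm)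
      have h2 : ¬ (a : ℕ) = (c : ℕ) + 1 := by
        intro h
        exact hc' (Fin.ext (by omega))
      simp only [Lmat, Matrix.of_apply, if_neg h1, if_neg h2]
      exact zero_mul _
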